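/- The kernel of the derivation Δ = D_1 + x_1^{p-1}D_2 + ··· + x_1^{p-1}···x_{n-2}^{p-1}D_{n-1}, acting as a linear operator on B_n, equals the p-dimensional space K = { a_0 + a_1x_n + ··· + a_{p-1}x_n^{p-1} : a_i ∈ k }. -/

import Mathlib

open MvPolynomial Finset

section Aux

variable {k : Type*} [Field k] {B : Type*} [CommRing B] [Algebra k B] {n p : ℕ}

/-- A derivation kills a product of elements it kills. -/
lemma der_prod_zero {ι : Type*} (Dd : Derivation k B B) (s : Finset ι) (f : ι → B)
    (h : ∀ j ∈ s, Dd (f j) = 0) : Dd (∏ j ∈ s, f j) = 0 := by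
  classical
  induction s using Finset.induction with
  | empty => simp
  | @insert a s ha ih =>
    rw [Finset.prod_insert ha, Derivation.leibniz, h a (mem_insert_self a s),
      ih (fun j hj => h j (mem_insert_of_mem hj))]
    simp

/-- Sum of derivations applied. -/
lemma der_sum_apply {ι : Type*} (s : Finset ι) (Ds : ι → Derivation k B B) (f : B) :
    (∑ i ∈ s, Ds i) f = ∑ i ∈ s, Ds i f := by
  classical
  induction s using Finset.induction with
  | empty => simp [Derivation.zero_apply]
  | @insert a s ha ih => rw [Finset.sum_insert ha, Derivation.add_apply, ih, Finset.sum_insert ha]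

lemma D_apply_prod (x : Fin n → B) (D : Fin n → Derivation k B B)
    (hD : ∀ i j, D i (x j) = if i = j then 1 else 0) (c : Fin n → ℕ) (i : Fin n) :
    D i (∏ j, x j ^ c j) =
      ((c i : k)) • ∏ j, x j ^ (if j = i then c i - 1 else c j) := by
  classical
  have h1 : ∏ j, x j ^ c j = x i ^ c i * ∏ j ∈ univ.erase i, x j ^ c j :=
    (Finset.mul_prod_erase univ _ (mem_univ i)).symm
  have h2 : D i (∏ j ∈ univ.erase i, x j ^ c j) = 0 := by
    refine der_prod_zero _ _ _ (fun j hj => ?_)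
    have hji : i ≠ j := fun h => (Finset.mem_erase.mp hj).1 h.symm
    rw [Derivation.leibniz_pow, hD, if_neg hji]
    simp
  have h3 : ∏ j, x j ^ (if j = i then c i - 1 else c j)
      = x i ^ (c i - 1) * ∏ j ∈ univ.erase i, x j ^ c j := by
    rw [← Finset.mul_prod_erase univ _ (mem_univ i), if_pos rfl]
    congr 1
    exact Finset.prod_congr rfl (fun j hj => by rw [if_neg (Finset.mem_erase.mp hj).1])
  rw [h1, Derivation.leibniz, h2, smul_zero, zero_add, Derivation.leibniz_pow, hD i i,
    if_pos rfl, h3]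
  rw [smul_eq_mul, smul_eq_mul, mul_one, ← Nat.cast_smul_eq_nsmul k (c i),
    mul_smul_comm, mul_comm]

lemma prod_pow_mul (x : Fin n → B) (c c' : Fin n → ℕ) :
    (∏ j, x j ^ c j) * (∏ j, x j ^ c' j) = ∏ j, x j ^ (c j + c' j) := by
  rw [← Finset.prod_mul_distrib]
  exact Finset.prod_congr rfl fun j _ => (pow_add _ _ _).symm

lemma prod_pow_zero (x : Fin n → B) (hxp : ∀ i, x i ^ p = 0) (c : Fin n → ℕ) (i : Fin n)
    (hi : p ≤ c i) : (∏ j, x j ^ c j) = 0 := by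
  refine Finset.prod_eq_zero (mem_univ i) ?_
  rw [← Nat.sub_add_cancel hi, pow_add, hxp i, mul_zero]

end Aux


open MvPolynomial Finset

section Aux2

variable {k : Type*} [Field k] {n p : ℕ}

lemma ideal_eq_mono_image :
    (Set.range fun i : Fin n => (X i : MvPolynomial (Fin n) k) ^ p) =
      (fun s => monomial s (1 : k)) '' Set.range (fun i : Fin n => Finsupp.single i p) := by
  rw [← Set.range_comp]
  refine congrArg _ (funext fun i => ?_)
  exact X_pow_eq_monomial

lemma mem_trunc_ideal_iff {f : MvPolynomial (Fin n) k} :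
    f ∈ Ideal.span (Set.range fun i : Fin n => (X i : MvPolynomial (Fin n) k) ^ p) ↔
      ∀ s ∈ f.support, ∃ i, p ≤ s i := by
  rw [ideal_eq_mono_image, mem_ideal_span_monomial_image]
  refine forall₂_congr fun s _ => ?_
  constructor
  · rintro ⟨si, ⟨i, rfl⟩, hle⟩
    exact ⟨i, by simpa using (Finsupp.single_le_iff.mp hle)⟩
  · rintro ⟨i, hi⟩
    exact ⟨Finsupp.single i p, ⟨i, rfl⟩, Finsupp.single_le_iff.mpr hi⟩

variable {B : Type*} [CommRing B] [Algebra k B]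

/-- abbreviation for the exponent finsupp -/
noncomputable def expF (a : Fin n → Fin p) : Fin n →₀ ℕ :=
  Finsupp.equivFunOnFinite.symm fun i => (a i : ℕ)

lemma expF_apply (a : Fin n → Fin p) (i : Fin n) : expF a i = (a i : ℕ) := rfl

lemma expF_injective : Function.Injective (expF (n := n) (p := p)) := by
  intro a b h
  funext i
  exact Fin.ext (by rw [← expF_apply a i, ← expF_apply b i, h])

lemma mono_expF (a : Fin n → Fin p) :
    (monomial (expF a) (1 : k)) = ∏ i, (X i : MvPolynomial (Fin n) k) ^ (a i : ℕ) := by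
  rw [monomial_eq, C_1, one_mul, Finsupp.prod_fintype]
  · rfl
  · intro i; exact pow_zero _

variable (e : (MvPolynomial (Fin n) k ⧸
        Ideal.span (Set.range fun i : Fin n => (X i : MvPolynomial (Fin n) k) ^ p)) ≃ₐ[k] B)
  (x : Fin n → B) (hx : ∀ j, x j = e (Ideal.Quotient.mk _ (X j)))

include e x hx

lemma e_mk_mono (a : Fin n → Fin p) :
    e (Ideal.Quotient.mk _ (monomial (expF a) (1 : k))) = ∏ i, x i ^ (a i : ℕ) := by
  rw [mono_expF, map_prod, map_prod]
  refine Finset.prod_congr rfl fun i _ => ?_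
  rw [map_pow, map_pow, hx i]

lemma basis_li : LinearIndependent k (fun a : Fin n → Fin p => ∏ i, x i ^ (a i : ℕ)) := by
  rw [Fintype.linearIndependent_iff]
  intro g hg a₀
  classical
  let L : MvPolynomial (Fin n) k →ₗ[k] B :=
    e.toLinearMap.comp (Ideal.Quotient.mkₐ k
      (Ideal.span (Set.range fun i : Fin n => (X i : MvPolynomial (Fin n) k) ^ p))).toLinearMap
  have hL : ∀ z, L z = e (Ideal.Quotient.mk _ z) := fun z => rfl
  have hmkP : L (∑ a : Fin n → Fin p, monomial (expF a) (g a)) = 0 := by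
    rw [map_sum, ← hg]
    refine Finset.sum_congr rfl fun a _ => ?_
    have h1 : (monomial (expF a)) (g a) = g a • (monomial (expF a)) (1 : k) := by
      rw [smul_monomial, smul_eq_mul, mul_one]
    rw [h1, map_smul, hL, e_mk_mono e x hx]
  have hPmem : (∑ a : Fin n → Fin p, monomial (expF a) (g a)) ∈
      Ideal.span (Set.range fun i : Fin n => (X i : MvPolynomial (Fin n) k) ^ p) := by
    rw [← Ideal.Quotient.eq_zero_iff_mem]
    refine e.injective ?_
    rw [map_zero, ← hL, hmkP]
  have hcoeff : coeff (expF a₀) (∑ a : Fin n → Fin p, monomial (expF a) (g a)) = g a₀ := by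
    rw [coeff_sum, Finset.sum_eq_single_of_mem a₀ (mem_univ _)]
    · rw [coeff_monomial, if_pos rfl]
    · intro a _ hne
      rw [coeff_monomial, if_neg (fun h => hne (expF_injective h))]
  by_contra hga
  have hsupp : expF a₀ ∈ (∑ a : Fin n → Fin p, monomial (expF a) (g a)).support :=
    mem_support_iff.mpr (by rw [hcoeff]; exact hga)
  obtain ⟨i, hi⟩ := mem_trunc_ideal_iff.mp hPmem _ hsupp
  rw [expF_apply] at hi
  exact absurd hi (not_le.mpr (a₀ i).isLt)

lemma basis_span :
    ⊤ ≤ Submodule.span k (Set.range fun a : Fin n → Fin p => ∏ i, x i ^ (a i : ℕ)) := by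
  classical
  let L : MvPolynomial (Fin n) k →ₗ[k] B :=
    e.toLinearMap.comp (Ideal.Quotient.mkₐ k
      (Ideal.span (Set.range fun i : Fin n => (X i : MvPolynomial (Fin n) k) ^ p))).toLinearMap
  have hL : ∀ z, L z = e (Ideal.Quotient.mk _ z) := fun z => rfl
  have hsurj : Function.Surjective L := by
    intro b
    obtain ⟨q, hq⟩ := e.surjective b
    obtain ⟨z, hz⟩ := Ideal.Quotient.mk_surjective q
    exact ⟨z, by rw [hL, hz, hq]⟩
  have htop : (⊤ : Submodule k B) = LinearMap.range L := (LinearMap.range_eq_top.mpr hsurj).symm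
  rw [htop, LinearMap.range_eq_map, ← (basisMonomials (Fin n) k).span_eq,
    Submodule.map_span, coe_basisMonomials]
  rw [Submodule.span_le]
  rintro y ⟨pp, ⟨s, rfl⟩, rfl⟩
  by_cases hs : ∀ i, (s i) < p
  · have hsa : expF (fun i => (⟨s i, hs i⟩ : Fin p)) = s := Finsupp.ext fun i => rfl
    have h2 : L (monomial s 1) = ∏ i, x i ^ ((⟨s i, hs i⟩ : Fin p) : ℕ) := by
      conv_lhs => rw [← hsa]
      rw [hL, e_mk_mono e x hx]
    rw [h2]
    exact Submodule.subset_span ⟨_, rfl⟩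
  · push_neg at hs
    obtain ⟨i, hi⟩ := hs
    have hmem : (monomial s (1:k)) ∈
        Ideal.span (Set.range fun i : Fin n => (X i : MvPolynomial (Fin n) k) ^ p) := by
      rw [mem_trunc_ideal_iff]
      intro t ht
      rw [support_monomial, if_neg (one_ne_zero)] at ht
      rw [Finset.mem_singleton] at ht
      exact ⟨i, ht ▸ hi⟩
    have h0 : L (monomial s 1) = 0 := by
      rw [hL, Ideal.Quotient.eq_zero_iff_mem.mpr hmem, map_zero]
    rw [h0]
    exact Submodule.zero_mem _

end Aux2

section Aux3

variable {k : Type*} [Field k] {B : Type*} [CommRing B] [Algebra k B] {n p : ℕ}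

def predFn (p : ℕ) {n : ℕ} (a : Fin n → Fin p) (i₀ : Fin n) : Fin n → ℕ :=
  fun j => if j < i₀ then p - 1 else if j = i₀ then (a i₀ : ℕ) - 1 else (a j : ℕ)

def predP {n p : ℕ} [NeZero p] (a : Fin n → Fin p) (i₀ : Fin n) : Fin n → Fin p :=
  fun j => if j < i₀ then ⟨p - 1, Nat.sub_lt (NeZero.pos p) one_pos⟩
    else if j = i₀ then ⟨(a i₀ : ℕ) - 1, lt_of_le_of_lt (Nat.sub_le _ _) (a i₀).isLt⟩
    else a j

lemma predP_val {n p : ℕ} [NeZero p] (a : Fin n → Fin p) (i₀ : Fin n) (j : Fin n) :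
    ((predP a i₀ j : ℕ)) = predFn p a i₀ j := by
  unfold predP predFn
  split_ifs <;> rfl

lemma predP_inj {n p : ℕ} [NeZero p] (hp2 : 2 ≤ p) {a a' : Fin n → Fin p} {i₀ i₀' : Fin n}
    (ha : a i₀ ≠ 0) (hmin : ∀ j, j < i₀ → a j = 0)
    (ha' : a' i₀' ≠ 0) (hmin' : ∀ j, j < i₀' → a' j = 0)
    (h : predP a i₀ = predP a' i₀') : a = a' := by
  have hva : (a i₀ : ℕ) ≠ 0 := fun hc => ha (Fin.ext hc)
  have hva' : (a' i₀' : ℕ) ≠ 0 := fun hc => ha' (Fin.ext hc)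
  have hii : i₀ = i₀' := by
    rcases lt_trichotomy i₀ i₀' with hlt | heq | hgt
    · have := congrFun h i₀
      unfold predP at this
      rw [if_neg (lt_irrefl i₀), if_pos rfl, if_pos hlt] at this
      have hv := congrArg Fin.val this
      simp only at hv
      have := (a i₀).isLt
      omega
    · exact heq
    · have := congrFun h i₀'
      unfold predP at this
      rw [if_pos hgt, if_neg (lt_irrefl i₀'), if_pos rfl] at this
      have hv := congrArg Fin.val this
      simp only at hv
      have := (a' i₀').isLt
      omega
  subst hii
  funext j
  rcases lt_trichotomy j i₀ with hlt | heq | hgt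
  · rw [hmin j hlt, hmin' j hlt]
  · subst heq
    have := congrFun h j
    unfold predP at this
    rw [if_neg (lt_irrefl j), if_pos rfl, if_neg (lt_irrefl j), if_pos rfl] at this
    have hv := congrArg Fin.val this
    simp only at hv
    exact Fin.ext (by omega)
  · have := congrFun h j
    unfold predP at this
    rw [if_neg (not_lt.mpr hgt.le), if_neg (ne_of_gt hgt),
      if_neg (not_lt.mpr hgt.le), if_neg (ne_of_gt hgt)] at this
    exact this

lemma delta_pow_zero (hn : 3 ≤ n) (x : Fin n → B)
    (D : Fin n → Derivation k B B) (hD : ∀ i j, D i (x j) = if i = j then 1 else 0)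
    (ℓ : Fin n) (hℓ : (ℓ : ℕ) = n - 1) (Δ : Derivation k B B)
    (hΔ : Δ = ∑ i : Fin (n - 1),
      (∏ j ∈ Finset.univ.filter (fun j : Fin (n - 1) => j < i),
          x (Fin.castLE (by omega : n - 1 ≤ n) j) ^ (p - 1)) •
        D (Fin.castLE (by omega : n - 1 ≤ n) i)) (m : ℕ) :
    Δ (x ℓ ^ m) = 0 := by
  rw [hΔ, der_sum_apply]
  refine Finset.sum_eq_zero fun i _ => ?_
  rw [Derivation.smul_apply, Derivation.leibniz_pow, hD, if_neg, smul_zero, smul_zero, smul_zero]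
  intro hc
  have h1 := congrArg Fin.val hc
  rw [Fin.coe_castLE] at h1
  have h2 := i.isLt
  omega

lemma delta_apply (hn : 3 ≤ n) [NeZero p] (x : Fin n → B) (hxp : ∀ i, x i ^ p = 0)
    (D : Fin n → Derivation k B B) (hD : ∀ i j, D i (x j) = if i = j then 1 else 0)
    (ℓ : Fin n) (hℓ : (ℓ : ℕ) = n - 1) (Δ : Derivation k B B)
    (hΔ : Δ = ∑ i : Fin (n - 1),
      (∏ j ∈ Finset.univ.filter (fun j : Fin (n - 1) => j < i),
          x (Fin.castLE (by omega : n - 1 ≤ n) j) ^ (p - 1)) •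
        D (Fin.castLE (by omega : n - 1 ≤ n) i))
    (a : Fin n → Fin p) (i₀ : Fin n) (hi₀ℓ : i₀ < ℓ) (hne : a i₀ ≠ 0)
    (hmin : ∀ j, j < i₀ → a j = 0) :
    Δ (∏ j, x j ^ (a j : ℕ)) = ((a i₀ : ℕ) : k) • ∏ j, x j ^ (predFn p a i₀ j) := by
  have hn1 : (0:ℕ) < n - 1 := by omega
  have hterm : ∀ i : Fin (n-1),
      ((∏ j ∈ Finset.univ.filter (fun j : Fin (n - 1) => j < i),
          x (Fin.castLE (by omega : n - 1 ≤ n) j) ^ (p - 1)) •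
        D (Fin.castLE (by omega : n - 1 ≤ n) i)) (∏ j, x j ^ (a j : ℕ))
      = ((a (Fin.castLE (by omega : n - 1 ≤ n) i) : ℕ) : k) •
          ∏ j, x j ^ ((if j < Fin.castLE (by omega : n - 1 ≤ n) i then p - 1 else 0) +
            (if j = Fin.castLE (by omega : n - 1 ≤ n) i
              then (a (Fin.castLE (by omega : n - 1 ≤ n) i) : ℕ) - 1 else (a j : ℕ))) := by
    intro i
    rw [Derivation.smul_apply, D_apply_prod x D hD, smul_comm, smul_eq_mul]
    congr 1
    have hP : (∏ j ∈ Finset.univ.filter (fun j : Fin (n - 1) => j < i),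
        x (Fin.castLE (by omega : n - 1 ≤ n) j) ^ (p - 1))
        = ∏ j : Fin n, x j ^ (if j < Fin.castLE (by omega : n - 1 ≤ n) i then p - 1 else 0) := by
      rw [← Finset.prod_filter_mul_prod_filter_not univ
        (fun j : Fin n => j < Fin.castLE (by omega : n - 1 ≤ n) i)]
      have hone : ∏ j ∈ univ.filter (fun j : Fin n => ¬ j < Fin.castLE (by omega : n - 1 ≤ n) i),
          x j ^ (if j < Fin.castLE (by omega : n - 1 ≤ n) i then p - 1 else 0) = 1 :=
        Finset.prod_eq_one fun j hj => by rw [if_neg (mem_filter.mp hj).2, pow_zero]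
      rw [hone, mul_one]
      refine Finset.prod_nbij' (fun j => Fin.castLE (by omega : n - 1 ≤ n) j)
        (fun j => if h : (j : ℕ) < n - 1 then ⟨(j : ℕ), h⟩ else ⟨0, hn1⟩)
        ?_ ?_ ?_ ?_ ?_
      · intro j hj
        rw [mem_filter] at hj ⊢
        exact ⟨mem_univ _, by rw [Fin.lt_def] at hj ⊢; exact hj.2⟩
      · intro j hj
        rw [mem_filter] at hj
        have hji : (j : ℕ) < (i : ℕ) := hj.2
        have hjn : (j : ℕ) < n - 1 := by have := i.isLt; omega
        show (if h : (j:ℕ) < n - 1 then (⟨(j:ℕ), h⟩ : Fin (n-1)) else ⟨0, hn1⟩) ∈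
          univ.filter (fun j' : Fin (n-1) => j' < i)
        rw [dif_pos hjn, mem_filter]
        exact ⟨mem_univ _, by rw [Fin.lt_def]; exact hji⟩
      · intro j hj
        rw [mem_filter] at hj
        have hji : (j : ℕ) < (i : ℕ) := hj.2
        have hjn : (j : ℕ) < n - 1 := by have := i.isLt; omega
        show (if h : (j:ℕ) < n - 1 then (⟨(j:ℕ), h⟩ : Fin (n-1)) else ⟨0, hn1⟩) = _
        rw [dif_pos hjn]
      · intro j hj
        rw [mem_filter] at hj
        have hji : (j : ℕ) < (i : ℕ) := by
          have := hj.2; rwa [Fin.lt_def] at this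
        have hjn : (j : ℕ) < n - 1 := by have := i.isLt; omega
        show Fin.castLE _ (if h : (j:ℕ) < n - 1 then (⟨(j:ℕ), h⟩ : Fin (n-1)) else ⟨0, hn1⟩) = _
        rw [dif_pos hjn]
        exact Fin.ext rfl
      · intro j hj
        rw [mem_filter] at hj
        rw [if_pos (by rw [Fin.lt_def]; exact hj.2)]
    rw [hP, prod_pow_mul]
  rw [hΔ, der_sum_apply]
  have hi₀n : (i₀ : ℕ) < n - 1 := by
    have := hi₀ℓ; rw [Fin.lt_def, hℓ] at this; exact this
  have hcast : Fin.castLE (by omega : n - 1 ≤ n) (⟨(i₀ : ℕ), hi₀n⟩ : Fin (n-1)) = i₀ :=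
    Fin.ext rfl
  rw [Finset.sum_eq_single_of_mem (⟨(i₀ : ℕ), hi₀n⟩ : Fin (n-1)) (mem_univ _)]
  · rw [hterm, hcast]
    congr 1
    refine Finset.prod_congr rfl fun j _ => ?_
    congr 1
    unfold predFn
    have hminv : (∀ j', j' < i₀ → (a j' : ℕ) = 0) := fun j' h => by rw [hmin j' h]; rfl
    rcases lt_trichotomy j i₀ with hlt | heq | hgt
    · rw [if_pos hlt, if_pos hlt, if_neg (ne_of_lt hlt), hminv j hlt]
      omega
    · subst heq
      rw [if_neg (lt_irrefl j), if_neg (lt_irrefl j), if_pos rfl]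
      omega
    · rw [if_neg (not_lt.mpr hgt.le), if_neg (not_lt.mpr hgt.le), if_neg (ne_of_gt hgt)]
      omega
  · intro i _ hne'
    rw [hterm]
    rcases lt_trichotomy (Fin.castLE (by omega : n - 1 ≤ n) i) i₀ with hlt | heq | hgt
    · have : a (Fin.castLE (by omega : n - 1 ≤ n) i) = 0 := hmin _ hlt
      rw [this]
      simp
    · exfalso
      apply hne'
      apply Fin.ext
      have := congrArg Fin.val heq
      simpa using this
    · rw [prod_pow_zero x hxp _ i₀, smul_zero]
      rw [if_pos hgt, if_neg (ne_of_lt hgt)]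
      have h1 : 1 ≤ (a i₀ : ℕ) := Nat.one_le_iff_ne_zero.mpr (fun hc => hne (Fin.ext hc))
      have hp1 : 1 ≤ p := NeZero.pos p
      omega

end Aux3
/-- The kernel of the derivation `Δ = D_1 + x_1^{p-1}D_2 + ⋯ + x_1^{p-1}⋯x_{n-2}^{p-1}D_{n-1}`,
acting as a linear operator on `B_n`, equals the `p`-dimensional space
`K = { a_0 + a_1 x_n + ⋯ + a_{p-1} x_n^{p-1} }`. -/
theorem kernel_of_Delta
    (k : Type*) [Field k] (p n : ℕ) [Fact (Nat.Prime p)] [CharP k p] (hp : 3 < p)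
    (hn : 3 ≤ n)
    (B : Type*) [CommRing B] [Algebra k B]
    (e : (MvPolynomial (Fin n) k ⧸
        Ideal.span (Set.range fun i : Fin n => (X i : MvPolynomial (Fin n) k) ^ p)) ≃ₐ[k] B)
    (x : Fin n → B) (hx : ∀ j, x j = e (Ideal.Quotient.mk _ (X j)))
    (D : Fin n → Derivation k B B) (hD : ∀ i j, D i (x j) = if i = j then 1 else 0)
    (ℓ : Fin n) (hℓ : (ℓ : ℕ) = n - 1)
    (Δ : Derivation k B B)
    (hΔ : Δ = ∑ i : Fin (n - 1),
      (∏ j ∈ Finset.univ.filter (fun j : Fin (n - 1) => j < i),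
          x (Fin.castLE (by omega : n - 1 ≤ n) j) ^ (p - 1)) •
        D (Fin.castLE (by omega : n - 1 ≤ n) i)) :
    ∀ f : B, Δ f = 0 ↔
      f ∈ Submodule.span k (Set.range fun a : Fin p => x ℓ ^ (a : ℕ)) := by
  classical
  intro f
  haveI : NeZero p := ⟨(Fact.out : p.Prime).ne_zero⟩
  -- the `p`-th powers vanish
  have hxp : ∀ i, x i ^ p = 0 := by
    intro i
    have h1 : (Ideal.Quotient.mk (Ideal.span
        (Set.range fun i : Fin n => (X i : MvPolynomial (Fin n) k) ^ p))) (X i ^ p) = 0 :=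
      Ideal.Quotient.eq_zero_iff_mem.mpr (Ideal.subset_span ⟨i, rfl⟩)
    rw [hx i, ← map_pow, ← map_pow, h1, map_zero]
  -- the basis of monomials
  let bas : Module.Basis (Fin n → Fin p) k B := Module.Basis.mk (basis_li e x hx) (basis_span e x hx)
  have hbas : ∀ a, bas a = ∏ i, x i ^ (a i : ℕ) := fun a => Module.Basis.mk_apply _ _ a
  -- the reverse inclusion: everything in the span is killed by Δ
  have hker : ∀ g ∈ Submodule.span k (Set.range fun a : Fin p => x ℓ ^ (a : ℕ)), Δ g = 0 := by
    intro g hg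
    have hle : Submodule.span k (Set.range fun a : Fin p => x ℓ ^ (a : ℕ)) ≤
        LinearMap.ker Δ.toLinearMap := by
      rw [Submodule.span_le]
      rintro y ⟨m, rfl⟩
      have h0 : Δ (x ℓ ^ (m : ℕ)) = 0 := delta_pow_zero hn x D hD ℓ hℓ Δ hΔ (m : ℕ)
      simp only [SetLike.mem_coe, LinearMap.mem_ker]
      exact h0
    have hmem := hle hg
    rw [LinearMap.mem_ker] at hmem
    exact hmem
  constructor
  · -- forward direction
    intro hΔf
    set S : Finset (Fin n → Fin p) := univ.filter (fun a => ∃ j, j < ℓ ∧ a j ≠ 0) with hS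
    -- index of the first nonzero coordinate
    set idx : (Fin n → Fin p) → Fin n := fun a =>
      if h : (univ.filter (fun j => j < ℓ ∧ a j ≠ 0)).Nonempty
      then (univ.filter (fun j => j < ℓ ∧ a j ≠ 0)).min' h else ℓ with hidxdef
    have hidx : ∀ a ∈ S, idx a < ℓ ∧ a (idx a) ≠ 0 ∧ ∀ j, j < idx a → a j = 0 := by
      intro a ha
      rw [hS, mem_filter] at ha
      obtain ⟨-, j, hjl, hjn⟩ := ha
      have hne : (univ.filter (fun j => j < ℓ ∧ a j ≠ 0)).Nonempty :=
        ⟨j, mem_filter.mpr ⟨mem_univ _, hjl, hjn⟩⟩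
      have hmem := Finset.min'_mem _ hne
      rw [mem_filter] at hmem
      have hidxa : idx a = (univ.filter (fun j => j < ℓ ∧ a j ≠ 0)).min' hne := by
        rw [hidxdef]; exact dif_pos hne
      refine ⟨by rw [hidxa]; exact hmem.2.1, by rw [hidxa]; exact hmem.2.2, ?_⟩
      intro j' hj'
      by_contra hj'ne
      have hj'l : j' < ℓ := lt_trans (hidxa ▸ hj') hmem.2.1
      have : (univ.filter (fun j => j < ℓ ∧ a j ≠ 0)).min' hne ≤ j' :=
        Finset.min'_le _ _ (mem_filter.mpr ⟨mem_univ _, hj'l, hj'ne⟩)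
      rw [← hidxa] at this
      exact absurd hj' (not_lt.mpr this)
    -- Δ on basis elements indexed by S
    have hDbas : ∀ a ∈ S, Δ (bas a) =
        (((a (idx a)) : ℕ) : k) • bas (predP a (idx a)) := by
      intro a ha
      obtain ⟨h1, h2, h3⟩ := hidx a ha
      rw [hbas, hbas, delta_apply hn x hxp D hD ℓ hℓ Δ hΔ a (idx a) h1 h2 h3]
      congr 1
      exact Finset.prod_congr rfl fun j _ => by rw [predP_val]
    -- Δ kills basis elements outside S
    have hDbas0 : ∀ a : Fin n → Fin p, a ∉ S → bas a = x ℓ ^ ((a ℓ : ℕ)) := by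
      intro a ha
      rw [hS, mem_filter] at ha
      push_neg at ha
      have ha' := ha (mem_univ _)
      rw [hbas]
      refine Finset.prod_eq_single ℓ ?_ (by intro h; exact absurd (mem_univ ℓ) h)
      intro j _ hj
      have hjl : j < ℓ := by
        rw [Fin.lt_def, hℓ]
        have h1 := j.isLt
        have h2 : (j : ℕ) ≠ n - 1 := fun hc => hj (Fin.ext (by rw [hc, hℓ]))
        omega
      rw [ha' j hjl, Fin.val_zero, pow_zero]
    -- expand f in the basis
    have hsum := bas.sum_repr f
    have hΔsum : ∑ a ∈ S, ((bas.repr f a) * ((a (idx a) : ℕ) : k)) • bas (predP a (idx a))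
        = 0 := by
      have h1 : Δ f = ∑ a : Fin n → Fin p, bas.repr f a • Δ (bas a) := by
        conv_lhs => rw [← hsum]
        have h2 : Δ.toLinearMap (∑ a : Fin n → Fin p, bas.repr f a • bas a)
            = ∑ a : Fin n → Fin p, bas.repr f a • Δ.toLinearMap (bas a) := by
          rw [map_sum]
          exact Finset.sum_congr rfl fun a _ => by rw [map_smul]
        exact h2
      have h3 : ∑ a : Fin n → Fin p, bas.repr f a • Δ (bas a)
          = ∑ a ∈ S, ((bas.repr f a) * ((a (idx a) : ℕ) : k)) • bas (predP a (idx a)) := by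
        rw [← Finset.sum_subset (Finset.subset_univ S) (fun a _ ha => by
          rw [hDbas0 a ha, delta_pow_zero hn x D hD ℓ hℓ Δ hΔ, smul_zero])]
        exact Finset.sum_congr rfl fun a ha => by rw [hDbas a ha, smul_smul]
      rw [← h3, ← h1, hΔf]
    -- conclude that the coefficients on S vanish
    have hcoeffzero : ∀ a ∈ S, bas.repr f a = 0 := by
      intro a₀ ha₀
      obtain ⟨h1, h2, h3⟩ := hidx a₀ ha₀
      have h4 := congrArg (fun z => bas.repr z (predP a₀ (idx a₀))) hΔsum
      simp only [map_zero, Finsupp.coe_zero, Pi.zero_apply, map_sum, map_smul] at h4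
      rw [Finsupp.finset_sum_apply] at h4
      have h5 : ∀ a ∈ S, a ≠ a₀ →
          ((bas.repr f a * ((a (idx a) : ℕ) : k)) • bas.repr (bas (predP a (idx a))))
            (predP a₀ (idx a₀)) = 0 := by
        intro a ha hne
        obtain ⟨g1, g2, g3⟩ := hidx a ha
        rw [Module.Basis.repr_self, Finsupp.smul_apply, Finsupp.single_apply,
          if_neg (fun hc => hne (predP_inj (by omega) g2 g3 h2 h3 hc)), smul_zero]
      rw [Finset.sum_eq_single_of_mem a₀ ha₀ h5, Module.Basis.repr_self, Finsupp.smul_apply,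
        Finsupp.single_apply, if_pos rfl, smul_eq_mul, mul_one] at h4
      have h6 : ((a₀ (idx a₀) : ℕ) : k) ≠ 0 := by
        intro hc
        have := (CharP.cast_eq_zero_iff k p _).mp hc
        have h7 := Nat.le_of_dvd (Nat.pos_of_ne_zero (fun hz => h2 (Fin.ext hz))) this
        have h8 := (a₀ (idx a₀)).isLt
        omega
      exact (mul_eq_zero.mp h4).resolve_right h6
    -- now f is a combination of powers of `x ℓ`
    rw [← hsum]
    refine Submodule.sum_mem _ fun a _ => ?_
    by_cases ha : a ∈ S
    · rw [hcoeffzero a ha, zero_smul]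
      exact Submodule.zero_mem _
    · refine Submodule.smul_mem _ _ (Submodule.subset_span ?_)
      exact ⟨a ℓ, (hDbas0 a ha).symm⟩
  · exact fun h => hker f h
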